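/- Let G be a simple graph with n ≥ 4 vertices and m edges, ordered degree sequence Δ = d_1 ≥ d_2 ≥ ... ≥ d_n = δ. Then M_1(G) ≥ Δ² + (2m − Δ)²/(n−1) + (1/2)(d_2 − δ)² + (2(n−1)/(n−3))·((2m − Δ)/(n−1) − (d_2 + δ)/2)². -/
import Mathlib


open Finset

theorem stmt9_aux (k M a b c t u : ℝ) (hk : 4 ≤ k) (hc : t ^ 2 ≤ (k - 3) * u)
    (hs : t + (a + b + c) = 2 * M) :
    u + (a ^ 2 + b ^ 2 + c ^ 2) ≥
      a ^ 2 + (2 * M - a) ^ 2 / (k - 1)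
      + (1 / 2) * (b - c) ^ 2
      + (2 * (k - 1) / (k - 3)) * ((2 * M - a) / (k - 1) - (b + c) / 2) ^ 2 := by
  have hk3 : (0 : ℝ) < k - 3 := by linarith
  have hk1 : (0 : ℝ) < k - 1 := by linarith
  have h2M : 2 * M = t + (a + b + c) := hs.symm
  rw [h2M]
  have key : a ^ 2 + (t + (a + b + c) - a) ^ 2 / (k - 1)
      + (1 / 2) * (b - c) ^ 2
      + (2 * (k - 1) / (k - 3)) * ((t + (a + b + c) - a) / (k - 1) - (b + c) / 2) ^ 2
      = t ^ 2 / (k - 3) + (a ^ 2 + b ^ 2 + c ^ 2) := by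
    field_simp
    ring
  rw [key]
  have : t ^ 2 / (k - 3) ≤ u := by rw [div_le_iff₀ hk3]; linarith
  linarith

theorem stmt9 (n : ℕ) (hn : 4 ≤ n) {V : Type*} [Fintype V] [DecidableEq V]
    (G : SimpleGraph V) [DecidableRel G.Adj]
    (m : ℕ) (hm : m = G.edgeFinset.card)
    (e : Fin n ≃ V) (d : Fin n → ℕ) (hd : ∀ i, d i = G.degree (e i))
    (hsort : Antitone d) :
    ∑ v : V, (G.degree v : ℝ) ^ 2 ≥
      (d ⟨0, by omega⟩ : ℝ) ^ 2
      + (2 * (m : ℝ) - (d ⟨0, by omega⟩ : ℝ)) ^ 2 / ((n : ℝ) - 1)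
      + (1 / 2) * ((d ⟨1, by omega⟩ : ℝ) - (d ⟨n - 1, by omega⟩ : ℝ)) ^ 2
      + (2 * ((n : ℝ) - 1) / ((n : ℝ) - 3)) *
          ((2 * (m : ℝ) - (d ⟨0, by omega⟩ : ℝ)) / ((n : ℝ) - 1)
            - ((d ⟨1, by omega⟩ : ℝ) + (d ⟨n - 1, by omega⟩ : ℝ)) / 2) ^ 2 := by
  have h0 : 0 < n := by omega
  set i0 : Fin n := ⟨0, by omega⟩ with hi0
  set i1 : Fin n := ⟨1, by omega⟩ with hi1
  set i2 : Fin n := ⟨n - 1, by omega⟩ with hi2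
  have h01 : i0 ≠ i1 := by simp [hi0, hi1, Fin.ext_iff]
  have h02 : i0 ≠ i2 := by simp [hi0, hi2, Fin.ext_iff]; omega
  have h12 : i1 ≠ i2 := by simp [hi1, hi2, Fin.ext_iff]; omega
  have hsq : ∑ v : V, (G.degree v : ℝ) ^ 2 = ∑ i : Fin n, (d i : ℝ) ^ 2 :=
    (Fintype.sum_equiv e (fun i => (d i : ℝ) ^ 2) (fun v => (G.degree v : ℝ) ^ 2)
      (fun i => by simp [hd])).symm
  have hlin : ∑ i : Fin n, (d i : ℝ) = 2 * m := by
    have := G.sum_degrees_eq_twice_card_edges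
    have h1 : ∑ i : Fin n, (d i : ℝ) = ∑ v : V, (G.degree v : ℝ) :=
      Fintype.sum_equiv e _ _ (fun i => by simp [hd])
    rw [h1]
    push_cast [← Nat.cast_sum]
    rw [this, hm]; push_cast; ring
  set s3 : Finset (Fin n) := {i0, i1, i2} with hs3
  have hsub : s3 ⊆ univ := subset_univ _
  have hcard3 : s3.card = 3 := by
    rw [hs3, card_insert_of_notMem (by simp [h01, h02]),
      card_insert_of_notMem (by simp [h12]), card_singleton]
  set T : Finset (Fin n) := univ \ s3 with hT
  have hcardT : (T.card : ℝ) = (n : ℝ) - 3 := by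
    rw [hT, card_sdiff_of_subset hsub, card_univ, Fintype.card_fin, hcard3]
    push_cast [Nat.cast_sub (by omega : 3 ≤ n)]; ring
  have hsum3 : ∀ f : Fin n → ℝ, ∑ i ∈ s3, f i = f i0 + f i1 + f i2 := by
    intro f
    rw [hs3, sum_insert (by simp [h01, h02]), sum_insert (by simp [h12]), sum_singleton]
    ring
  have hsplit : ∀ f : Fin n → ℝ, ∑ i : Fin n, f i = (∑ i ∈ T, f i) + (f i0 + f i1 + f i2) := by
    intro f
    rw [← hsum3 f, hT, Finset.sum_sdiff hsub]
  have hst : (∑ i ∈ T, (d i : ℝ)) + ((d i0 : ℝ) + (d i1 : ℝ) + (d i2 : ℝ)) = 2 * m := by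
    rw [← hlin, hsplit (fun i => (d i : ℝ))]
  have hcauchy : (∑ i ∈ T, (d i : ℝ)) ^ 2 ≤ ((n : ℝ) - 3) * ∑ i ∈ T, (d i : ℝ) ^ 2 := by
    have := sq_sum_le_card_mul_sum_sq (s := T) (f := fun i => (d i : ℝ))
    rw [← hcardT]; exact_mod_cast this
  have hnk : (4 : ℝ) ≤ (n : ℝ) := by exact_mod_cast hn
  rw [hsq, hsplit (fun i => (d i : ℝ) ^ 2)]
  exact stmt9_aux (n : ℝ) (m : ℝ) (d i0 : ℝ) (d i1 : ℝ) (d i2 : ℝ) _ _ hnk hcauchy hst
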